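/- arXiv:1211.4747 — 5 statements merged into one kernel-verified Lean document; each statement's English description precedes it below -/
import Mathlib

section
/- An integer n belongs to PF(S) if and only if for any fixed nonzero s in S, the element t^{n+s} is a nonzero element of the socle of K[S]/(t^s); concretely: n ∉ S and n + m ∈ S for all nonzero m ∈ S, if and only if n + s ∉ s + S and n + s + n_i ∈ s + S for every generator n_i of S. -/
/-- n ∈ PF(S) iff, for a fixed nonzero s ∈ S, n + s ∉ s + S and
n + s + nᵢ ∈ s + S for every generator nᵢ. -/
theorem stmt0 (k : ℕ) (hk : 0 < k) (gens : Fin k → ℕ)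
    (hpos : ∀ i, 0 < gens i) (hgcd : Finset.univ.gcd gens = 1)
    (S : Set ℤ) (hS : S = {x : ℤ | ∃ u : Fin k → ℕ, x = ∑ i, (u i : ℤ) * gens i})
    (s : ℤ) (hs : s ∈ S) (hs0 : s ≠ 0) (n : ℤ) :
    (n ∉ S ∧ ∀ m ∈ S, m ≠ 0 → n + m ∈ S) ↔
      (n + s ∉ {y : ℤ | ∃ x ∈ S, y = s + x} ∧
        ∀ i, n + s + gens i ∈ {y : ℤ | ∃ x ∈ S, y = s + x}) := by
  have hmemS : ∀ x : ℤ, x ∈ S ↔ ∃ u : Fin k → ℕ, x = ∑ i, (u i : ℤ) * gens i := by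
    intro x; rw [hS]; rfl
  have hadd : ∀ x ∈ S, ∀ y ∈ S, x + y ∈ S := by
    intro x hx y hy
    rw [hmemS] at hx hy ⊢
    obtain ⟨u, hu⟩ := hx; obtain ⟨v, hv⟩ := hy
    refine ⟨u + v, ?_⟩
    simp [hu, hv, Finset.sum_add_distrib, add_mul]
  have hgen : ∀ i, ((gens i : ℤ)) ∈ S := by
    intro i
    rw [hmemS]
    refine ⟨fun j => if j = i then 1 else 0, ?_⟩
    simp
  have htrans : ∀ y : ℤ, (y ∈ {y : ℤ | ∃ x ∈ S, y = s + x}) ↔ y - s ∈ S := by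
    intro y; constructor
    · rintro ⟨x, hx, rfl⟩; simpa using hx
    · intro h; exact ⟨y - s, h, by ring⟩
  constructor
  · rintro ⟨hnS, hpf⟩
    constructor
    · rw [htrans]; simpa using hnS
    · intro i; rw [htrans]
      have hne : (gens i : ℤ) ≠ 0 := by exact_mod_cast (hpos i).ne'
      have := hpf (gens i) (hgen i) hne
      have heq : n + s + (gens i : ℤ) - s = n + gens i := by ring
      rw [heq]; exact this
  · rintro ⟨h1, h2⟩
    rw [htrans] at h1
    have h1' : n ∉ S := by simpa using h1
    refine ⟨h1', ?_⟩
    intro m hm hm0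
    rw [hmemS] at hm
    obtain ⟨u, hu⟩ := hm
    have hiex : ∃ i, u i ≠ 0 := by
      by_contra h
      push_neg at h
      exact hm0 (by simp [hu, h])
    obtain ⟨i, hi⟩ := hiex
    set u' : Fin k → ℕ := Function.update u i (u i - 1) with hu'
    have hdec : m = (gens i : ℤ) + ∑ j, (u' j : ℤ) * gens j := by
      rw [hu]
      rw [← Finset.add_sum_erase _ (fun j => (u j : ℤ) * gens j) (Finset.mem_univ i),
          ← Finset.add_sum_erase _ (fun j => (u' j : ℤ) * gens j) (Finset.mem_univ i)]
      have hsame : ∑ j ∈ Finset.univ.erase i, (u j : ℤ) * gens j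
          = ∑ j ∈ Finset.univ.erase i, (u' j : ℤ) * gens j := by
        refine Finset.sum_congr rfl ?_
        intro j hj
        have : j ≠ i := Finset.ne_of_mem_erase hj
        simp [hu', Function.update_of_ne this]
      rw [hsame]
      have hcast : ((u i : ℤ)) = 1 + ((u' i : ℤ)) := by
        simp only [hu', Function.update_self]
        have : 1 ≤ u i := Nat.one_le_iff_ne_zero.mpr hi
        push_cast [Nat.cast_sub this]
        ring
      rw [hcast]; ring
    have hng : n + (gens i : ℤ) ∈ S := by
      have := h2 i
      rw [htrans] at this
      have heq : n + s + (gens i : ℤ) - s = n + gens i := by ring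
      rwa [heq] at this
    have hu'S : (∑ j, (u' j : ℤ) * gens j) ∈ S := by
      rw [hmemS]; exact ⟨u', rfl⟩
    have : n + m = (n + gens i) + ∑ j, (u' j : ℤ) * gens j := by rw [hdec]; ring
    rw [this]
    exact hadd _ hng _ hu'S
end

section
/- The Hilbert series of the numerical semigroup S = ⟨9, 11, 13, 14⟩ satisfies: Σ_{s∈S} z^s · (1−z^13)(1−z^9)(1−z^11)(1−z^14) = 1 − z^39 − z^27 − z^22 − z^42 − z^37 + z^48 + z^49 + z^50 + z^51 + z^53 + z^55 − z^62 − z^77, as an identity of formal power series over ℚ. -/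
/-- minimal element of S=⟨9,11,13,14⟩ in residue class r mod 9 -/
def apf : ℕ → ℕ
  | 0 => 0
  | 1 => 28
  | 2 => 11
  | 3 => 39
  | 4 => 13
  | 5 => 14
  | 6 => 24
  | 7 => 25
  | 8 => 26
  | _ => 0

lemma apf_step (g : ℕ) (hg : g = 9 ∨ g = 11 ∨ g = 13 ∨ g = 14) (n : ℕ) :
    apf ((n + g) % 9) ≤ apf (n % 9) + g := by
  have h : (n + g) % 9 = (n % 9 + g) % 9 := by omega
  rw [h]
  have h9 : n % 9 < 9 := Nat.mod_lt _ (by norm_num)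
  interval_cases h : (n % 9) <;> rcases hg with rfl | rfl | rfl | rfl <;> decide

lemma mem_S_iff (n : ℕ) :
    (∃ a b c d : ℕ, n = 9 * a + 11 * b + 13 * c + 14 * d) ↔ apf (n % 9) ≤ n := by
  constructor
  · rintro ⟨a, b, c, d, rfl⟩
    induction a with
    | zero =>
      induction b with
      | zero =>
        induction c with
        | zero =>
          induction d with
          | zero => simp [apf]
          | succ d ih =>
            have := apf_step 14 (by norm_num) (9*0+11*0+13*0+14*d)
            have h2 : 9*0+11*0+13*0+14*(d+1) = (9*0+11*0+13*0+14*d) + 14 := by ring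
            rw [h2]; omega
        | succ c ih =>
          have := apf_step 13 (by norm_num) (9*0+11*0+13*c+14*d)
          have h2 : 9*0+11*0+13*(c+1)+14*d = (9*0+11*0+13*c+14*d) + 13 := by ring
          rw [h2]; omega
      | succ b ih =>
        have := apf_step 11 (by norm_num) (9*0+11*b+13*c+14*d)
        have h2 : 9*0+11*(b+1)+13*c+14*d = (9*0+11*b+13*c+14*d) + 11 := by ring
        rw [h2]; omega
    | succ a ih =>
      have := apf_step 9 (by norm_num) (9*a+11*b+13*c+14*d)
      have h2 : 9*(a+1)+11*b+13*c+14*d = (9*a+11*b+13*c+14*d) + 9 := by ring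
      rw [h2]; omega
  · intro h
    have h9 : n % 9 < 9 := Nat.mod_lt _ (by norm_num)
    have hm : n = apf (n % 9) + 9 * ((n - apf (n % 9)) / 9) := by
      interval_cases hr : (n % 9) <;> simp only [apf] at h ⊢ <;> omega
    clear hm
    interval_cases hr : (n % 9)
    · have e : apf 0 = 0 := rfl; rw [e] at h; exact ⟨n/9, 0, 0, 0, by omega⟩
    · have e : apf 1 = 28 := rfl; rw [e] at h; exact ⟨(n-28)/9, 0, 0, 2, by omega⟩
    · have e : apf 2 = 11 := rfl; rw [e] at h; exact ⟨(n-11)/9, 1, 0, 0, by omega⟩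
    · have e : apf 3 = 39 := rfl; rw [e] at h; exact ⟨(n-39)/9, 1, 0, 2, by omega⟩
    · have e : apf 4 = 13 := rfl; rw [e] at h; exact ⟨(n-13)/9, 0, 1, 0, by omega⟩
    · have e : apf 5 = 14 := rfl; rw [e] at h; exact ⟨(n-14)/9, 0, 0, 1, by omega⟩
    · have e : apf 6 = 24 := rfl; rw [e] at h; exact ⟨(n-24)/9, 1, 1, 0, by omega⟩
    · have e : apf 7 = 25 := rfl; rw [e] at h; exact ⟨(n-25)/9, 1, 0, 1, by omega⟩
    · have e : apf 8 = 26 := rfl; rw [e] at h; exact ⟨(n-26)/9, 0, 2, 0, by omega⟩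

open PowerSeries in
open scoped Classical in
lemma key
    (S : Set ℕ)
    (hS : S = {x : ℕ | ∃ a b c d : ℕ, x = 9 * a + 11 * b + 13 * c + 14 * d})
    (H : PowerSeries ℚ) (hH : H = PowerSeries.mk fun n => if n ∈ S then (1 : ℚ) else 0) :
    H * (1 - X ^ 9) = 1 + X ^ 11 + X ^ 13 + X ^ 14 + X ^ 24 + X ^ 25 + X ^ 26 + X ^ 28 + X ^ 39 := by
  ext n
  have hmem : ∀ m : ℕ, (m ∈ S) = (apf (m % 9) ≤ m) := by
    intro m; rw [hS]; simp only [Set.mem_setOf_eq]; exact propext (mem_S_iff m)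
  rw [mul_sub, mul_one]
  simp only [map_sub, map_add, map_one, hH, PowerSeries.coeff_mul_X_pow', PowerSeries.coeff_mk,
    PowerSeries.coeff_one, PowerSeries.coeff_X_pow, hmem]
  by_cases hn : n < 48
  · interval_cases n <;> norm_num [apf]
  · push_neg at hn
    have h1 : apf (n % 9) ≤ n := by
      have : n % 9 < 9 := Nat.mod_lt _ (by norm_num)
      interval_cases hr : (n % 9) <;> simp [apf] <;> omega
    have hmod : (n - 9) % 9 = n % 9 := by omega
    have h2 : apf ((n - 9) % 9) ≤ n - 9 := by
      rw [hmod]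
      have : n % 9 < 9 := Nat.mod_lt _ (by norm_num)
      interval_cases hr : (n % 9) <;> simp [apf] <;> omega
    rw [if_pos h1, if_pos (show 9 ≤ n by omega), if_pos h2]
    rw [if_neg (by omega : ¬ n = 0), if_neg (by omega : ¬ n = 11),
      if_neg (by omega : ¬ n = 13), if_neg (by omega : ¬ n = 14),
      if_neg (by omega : ¬ n = 24), if_neg (by omega : ¬ n = 25),
      if_neg (by omega : ¬ n = 26), if_neg (by omega : ¬ n = 28),
      if_neg (by omega : ¬ n = 39)]
    norm_num

open PowerSeries in
open scoped Classical in
/-- Hilbert series identity for S = ⟨9,11,13,14⟩. -/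
theorem stmt5
    (S : Set ℕ)
    (hS : S = {x : ℕ | ∃ a b c d : ℕ, x = 9 * a + 11 * b + 13 * c + 14 * d})
    (H : PowerSeries ℚ) (hH : H = PowerSeries.mk fun n => if n ∈ S then (1 : ℚ) else 0) :
    H * ((1 - X ^ 13) * (1 - X ^ 9) * (1 - X ^ 11) * (1 - X ^ 14)) =
      1 - X ^ 39 - X ^ 27 - X ^ 22 - X ^ 42 - X ^ 37 + X ^ 48 + X ^ 49 + X ^ 50
        + X ^ 51 + X ^ 53 + X ^ 55 - X ^ 62 - X ^ 77 := by
  have hA := key S hS H hH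
  have : H * ((1 - X ^ 13) * (1 - X ^ 9) * (1 - X ^ 11) * (1 - X ^ 14)) =
      (H * (1 - X ^ 9)) * ((1 - X ^ 13) * (1 - X ^ 11) * (1 - X ^ 14)) := by ring
  rw [this, hA]; ring
end

section
/- The Hilbert series of S = ⟨7, 9, 10⟩ satisfies (Σ_{s∈S} z^s) · (1−z^7)(1−z^9)(1−z^10) = 1 − z^28 − z^27 − z^30 + z^48 + z^37, as an identity of formal power series. -/
open PowerSeries

lemma ones_mul : (PowerSeries.mk fun _ => (1:ℚ)) * (1 - X) = 1 := by
  ext n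
  cases n with
  | zero => simp
  | succ k =>
    rw [mul_sub, mul_one, map_sub, PowerSeries.coeff_succ_mul_X]
    simp [PowerSeries.coeff_mk, PowerSeries.coeff_one]

lemma mem_big : ∀ n : ℕ, 23 ≤ n → ∃ a b c : ℕ, n = 7 * a + 9 * b + 10 * c := by
  intro n
  induction n using Nat.strong_induction_on with
  | _ n ih =>
    intro hn
    by_cases h : n < 30
    · interval_cases n
      · exact ⟨2, 1, 0, rfl⟩
      · exact ⟨2, 0, 1, rfl⟩
      · exact ⟨1, 2, 0, rfl⟩
      · exact ⟨1, 1, 1, rfl⟩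
      · exact ⟨1, 0, 2, rfl⟩
      · exact ⟨4, 0, 0, rfl⟩
      · exact ⟨0, 1, 2, rfl⟩
    · obtain ⟨a, b, c, h'⟩ := ih (n - 7) (by omega) (by omega)
      exact ⟨a + 1, b, c, by omega⟩

open PowerSeries in
open scoped Classical in

/-- Hilbert series identity for S = ⟨7,9,10⟩. -/
theorem stmt6
    (S : Set ℕ)
    (hS : S = {x : ℕ | ∃ a b c : ℕ, x = 7 * a + 9 * b + 10 * c})
    (H : PowerSeries ℚ) (hH : H = PowerSeries.mk fun n => if n ∈ S then (1 : ℚ) else 0) :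
    H * ((1 - X ^ 7) * (1 - X ^ 9) * (1 - X ^ 10)) =
      1 - X ^ 28 - X ^ 27 - X ^ 30 + X ^ 48 + X ^ 37 := by
  have hmem : ∀ n : ℕ, n ∈ S ↔ (n = 0 ∨ n = 7 ∨ n = 9 ∨ n = 10 ∨ n = 14 ∨ n = 16 ∨
      n = 17 ∨ n = 18 ∨ n = 19 ∨ n = 20 ∨ n = 21 ∨ 23 ≤ n) := by
    intro n
    rw [hS, Set.mem_setOf_eq]
    constructor
    · rintro ⟨a, b, c, rfl⟩
      by_cases h : 23 ≤ 7 * a + 9 * b + 10 * c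
      · tauto
      · have ha : a ≤ 3 := by omega
        have hb : b ≤ 2 := by omega
        have hc : c ≤ 2 := by omega
        interval_cases a <;> interval_cases b <;> interval_cases c <;> omega
    · intro h
      rcases h with rfl|rfl|rfl|rfl|rfl|rfl|rfl|rfl|rfl|rfl|rfl|h
      · exact ⟨0,0,0,rfl⟩
      · exact ⟨1,0,0,rfl⟩
      · exact ⟨0,1,0,rfl⟩
      · exact ⟨0,0,1,rfl⟩
      · exact ⟨2,0,0,rfl⟩
      · exact ⟨1,1,0,rfl⟩
      · exact ⟨1,0,1,rfl⟩
      · exact ⟨0,2,0,rfl⟩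
      · exact ⟨0,1,1,rfl⟩
      · exact ⟨0,0,2,rfl⟩
      · exact ⟨3,0,0,rfl⟩
      · exact mem_big n h
  have hH' : H = (1 + X^7 + X^9 + X^10 + X^14 + X^16 + X^17 + X^18 + X^19 + X^20 + X^21)
      + X^23 * (PowerSeries.mk fun _ => (1:ℚ)) := by
    rw [hH]
    ext n
    rw [PowerSeries.coeff_mk, hmem n]
    simp only [map_add, PowerSeries.coeff_one, PowerSeries.coeff_X_pow,
      PowerSeries.coeff_X_pow_mul', PowerSeries.coeff_mk]
    by_cases h23 : 23 ≤ n
    · rw [if_pos (by omega), if_neg (show n ≠ 0 by omega), if_neg (show n ≠ 7 by omega),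
        if_neg (show n ≠ 9 by omega), if_neg (show n ≠ 10 by omega),
        if_neg (show n ≠ 14 by omega), if_neg (show n ≠ 16 by omega),
        if_neg (show n ≠ 17 by omega), if_neg (show n ≠ 18 by omega),
        if_neg (show n ≠ 19 by omega), if_neg (show n ≠ 20 by omega),
        if_neg (show n ≠ 21 by omega), if_pos h23]
      norm_num
    · push_neg at h23
      interval_cases n <;> norm_num
  rw [hH']
  have key : X^23 * (PowerSeries.mk fun _ => (1:ℚ)) *
      ((1 - X ^ 7) * (1 - X ^ 9) * (1 - X ^ 10)) =
      X^23 * ((1 + X + X^2 + X^3 + X^4 + X^5 + X^6) * (1 - X ^ 9) * (1 - X ^ 10)) := by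
    have : (1 - X^7 : PowerSeries ℚ) = (1 - X) * (1 + X + X^2 + X^3 + X^4 + X^5 + X^6) := by
      ring
    rw [this]
    calc X^23 * (PowerSeries.mk fun _ => (1:ℚ)) *
        ((1 - X) * (1 + X + X^2 + X^3 + X^4 + X^5 + X^6) * (1 - X ^ 9) * (1 - X ^ 10))
        = ((PowerSeries.mk fun _ => (1:ℚ)) * (1 - X)) *
          (X^23 * ((1 + X + X^2 + X^3 + X^4 + X^5 + X^6) * (1 - X ^ 9) * (1 - X ^ 10))) := by
          ring
      _ = _ := by rw [ones_mul, one_mul]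
  rw [add_mul, key]
  ring
end

section
/- Let S = ⟨n_1, n_2, n_3, n_4⟩ be a numerical semigroup and suppose α_1 is the least positive integer with α_1 n_1 ∈ ⟨n_2, n_3, n_4⟩, and p_1, p_2 are positive integers with p_1 < α_1 and α_2 the least positive integer with α_2 n_2 ∈ ⟨n_1, n_3, n_4⟩ satisfying p_2 < α_2. Then (p_1 n_1 + p_2 n_2) − α_1 n_1 ∉ S. -/
/-- if α1 is least positive with α1·n1 ∈ ⟨n2,n3,n4⟩, α2 is least
positive with α2·n2 ∈ ⟨n1,n3,n4⟩, and 0 < p1 < α1, 0 < p2 < α2, then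
(p1·n1 + p2·n2) − α1·n1 ∉ S = ⟨n1,n2,n3,n4⟩. -/
theorem stmt11 (n1 n2 n3 n4 : ℕ)
    (h1 : 0 < n1) (h2 : 0 < n2) (h3 : 0 < n3) (h4 : 0 < n4)
    (hgcd : Nat.gcd (Nat.gcd n1 n2) (Nat.gcd n3 n4) = 1)
    (S : Set ℤ)
    (hS : S = {x : ℤ | ∃ a b c d : ℕ, x = (a : ℤ) * n1 + b * n2 + c * n3 + d * n4})
    (α1 α2 p1 p2 : ℕ)
    (hα1mem : ∃ b c d : ℕ, α1 * n1 = b * n2 + c * n3 + d * n4)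
    (hα1pos : 0 < α1)
    (hα1min : ∀ u : ℕ, 0 < u → (∃ b c d : ℕ, u * n1 = b * n2 + c * n3 + d * n4) → α1 ≤ u)
    (hα2mem : ∃ a c d : ℕ, α2 * n2 = a * n1 + c * n3 + d * n4)
    (hα2pos : 0 < α2)
    (hα2min : ∀ u : ℕ, 0 < u → (∃ a c d : ℕ, u * n2 = a * n1 + c * n3 + d * n4) → α2 ≤ u)
    (hp1 : 0 < p1) (hp1' : p1 < α1) (hp2 : 0 < p2) (hp2' : p2 < α2) :
    ((p1 : ℤ) * n1 + p2 * n2) - (α1 : ℤ) * n1 ∉ S := by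
  subst hS
  rintro ⟨u1, u2, u3, u4, heq⟩
  -- rearrange: (p2 - u2) * n2 = (α1 - p1 + u1) * n1 + u3*n3 + u4*n4 over ℤ
  have key : ((p2 : ℤ) - u2) * n2 = ((α1 : ℤ) - p1 + u1) * n1 + u3 * n3 + u4 * n4 := by
    linarith [heq]
  have hpos : (0 : ℤ) < ((α1 : ℤ) - p1 + u1) * n1 + u3 * n3 + u4 * n4 := by
    have : (0 : ℤ) < ((α1 : ℤ) - p1 + u1) * n1 := by
      apply mul_pos
      · have : (p1 : ℤ) < α1 := by exact_mod_cast hp1'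
        have hu1 : (0 : ℤ) ≤ u1 := Int.natCast_nonneg u1
        linarith
      · exact_mod_cast h1
    have h3' : (0 : ℤ) ≤ (u3 : ℤ) * n3 := by positivity
    have h4' : (0 : ℤ) ≤ (u4 : ℤ) * n4 := by positivity
    linarith
  have hu2lt : u2 < p2 := by
    by_contra hle
    push_neg at hle
    have : ((p2 : ℤ) - u2) ≤ 0 := by
      have : (p2 : ℤ) ≤ u2 := by exact_mod_cast hle
      linarith
    have hn2 : (0 : ℤ) < n2 := by exact_mod_cast h2
    nlinarith [key]
  set v := p2 - u2 with hv
  have hvpos : 0 < v := Nat.sub_pos_of_lt hu2lt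
  have hmem : ∃ a c d : ℕ, v * n2 = a * n1 + c * n3 + d * n4 := by
    refine ⟨α1 - p1 + u1, u3, u4, ?_⟩
    have hcast : ((v : ℤ)) * n2 = ((α1 - p1 + u1 : ℕ) : ℤ) * n1 + (u3 : ℤ) * n3 + (u4 : ℤ) * n4 := by
      have h1' : ((v : ℕ) : ℤ) = (p2 : ℤ) - u2 := by
        rw [hv]; exact_mod_cast Int.ofNat_sub (le_of_lt hu2lt)
      have h2' : ((α1 - p1 + u1 : ℕ) : ℤ) = (α1 : ℤ) - p1 + u1 := by
        push_cast [Nat.sub_add_comm (le_of_lt hp1')]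
        omega
      rw [h1', h2', key]
    exact_mod_cast hcast
  have := hα2min v hvpos hmem
  omega
end

section
/- With the hypotheses of Bresinsky's parametrization of 4-generated symmetric semigroups (α_1 = α_21+α_31, α_2 = α_32+α_42, α_3 = α_13+α_43, α_4 = α_14+α_24, and n_1 = α_2α_3α_14 + α_32α_13α_24, n_2 = α_3α_4α_21 + α_31α_43α_24, n_3 = α_1α_4α_32 + α_14α_42α_31, n_4 = α_1α_2α_43 + α_42α_21α_13), one has α_1 n_1 + α_24 n_4 = α_2 n_2 + α_31 n_1 = α_3 n_3 + α_42 n_2 = α_4 n_4 + α_13 n_3. -/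
/-- Bresinsky degree identity a₅:
α1·n1 + α24·n4 = α2·n2 + α31·n1 = α3·n3 + α42·n2 = α4·n4 + α13·n3. -/
theorem stmt14 (α1 α2 α3 α4 α21 α31 α32 α42 α13 α43 α14 α24 : ℕ)
    (n1 n2 n3 n4 : ℕ)
    (h21 : 0 < α21) (h31 : 0 < α31) (h32 : 0 < α32) (h42 : 0 < α42)
    (h13 : 0 < α13) (h43 : 0 < α43) (h14 : 0 < α14) (h24 : 0 < α24)
    (ha1 : α1 = α21 + α31) (ha2 : α2 = α32 + α42)
    (ha3 : α3 = α13 + α43) (ha4 : α4 = α14 + α24)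
    (hn1 : n1 = α2 * α3 * α14 + α32 * α13 * α24)
    (hn2 : n2 = α3 * α4 * α21 + α31 * α43 * α24)
    (hn3 : n3 = α1 * α4 * α32 + α14 * α42 * α31)
    (hn4 : n4 = α1 * α2 * α43 + α42 * α21 * α13) :
    α1 * n1 + α24 * n4 = α2 * n2 + α31 * n1 ∧
      α2 * n2 + α31 * n1 = α3 * n3 + α42 * n2 ∧
      α3 * n3 + α42 * n2 = α4 * n4 + α13 * n3 := by
  subst ha1 ha2 ha3 ha4 hn1 hn2 hn3 hn4; refine ⟨by ring, by ring, by ring⟩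
end
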